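/- arXiv:2209.08003 — 8 statements merged into one kernel-verified Lean document; each statement's English description precedes it below -/
import Mathlib

section
/- Let n ≥ 1, let D be an n×n real diagonal matrix with strictly positive diagonal entries, let Q be an n×n real orthogonal matrix, and let Λ be an n×n real diagonal matrix with all diagonal entries in [0,1]. Set W = D^{-1/2} Q Λ Qᵀ D^{1/2} and W⁺ = D^{-1/2} Q Λ⁺ Qᵀ D^{1/2}, where Λ⁺ is the diagonal matrix with Λ⁺_ii = Λ_ii⁻¹ if Λ_ii > 0 and Λ⁺_ii = 0 otherwise. Then the matrix D(I − W)W⁺ is symmetric and positive semidefinite. -/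
open Matrix

theorem stmt_0 (n : ℕ) (hn : 1 ≤ n)
    (d l : Fin n → ℝ) (hd : ∀ i, 0 < d i) (hl : ∀ i, 0 ≤ l i ∧ l i ≤ 1)
    (Q W Wp : Matrix (Fin n) (Fin n) ℝ)
    (hQ : Qᵀ * Q = 1)
    (hW : W = diagonal (fun i => (Real.sqrt (d i))⁻¹) * Q * diagonal l * Qᵀ *
      diagonal (fun i => Real.sqrt (d i)))
    (hWp : Wp = diagonal (fun i => (Real.sqrt (d i))⁻¹) * Q *
      diagonal (fun i => if 0 < l i then (l i)⁻¹ else 0) * Qᵀ *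
      diagonal (fun i => Real.sqrt (d i))) :
    (diagonal d * (1 - W) * Wp)ᵀ = diagonal d * (1 - W) * Wp ∧
    ∀ x : Fin n → ℝ, 0 ≤ x ⬝ᵥ (diagonal d * (1 - W) * Wp) *ᵥ x := by
  have hQQt : Q * Qᵀ = 1 := mul_eq_one_comm.mp hQ
  set s : Fin n → ℝ := fun i => Real.sqrt (d i) with hs
  have hspos : ∀ i, 0 < s i := fun i => Real.sqrt_pos.mpr (hd i)
  set lp : Fin n → ℝ := fun i => if 0 < l i then (l i)⁻¹ else 0 with hlp
  set μ : Fin n → ℝ := fun i => lp i - l i * lp i with hμ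
  have hμnn : ∀ i, 0 ≤ μ i := by
    intro i
    simp only [hμ, hlp]
    by_cases h : 0 < l i
    · simp only [if_pos h]
      rw [mul_inv_cancel₀ (ne_of_gt h)]
      have h1 : 1 ≤ (l i)⁻¹ := one_le_inv_iff₀.mpr ⟨h, (hl i).2⟩
      linarith
    · simp [if_neg h]
  set r : Fin n → ℝ := fun i => Real.sqrt (μ i) with hr
  have hrr : ∀ i, r i * r i = μ i := fun i => Real.mul_self_sqrt (hμnn i)
  set S : Matrix (Fin n) (Fin n) ℝ := diagonal s with hS
  set Si : Matrix (Fin n) (Fin n) ℝ := diagonal (fun i => (s i)⁻¹) with hSi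
  have hSSi : S * Si = 1 := by
    rw [hS, hSi, Matrix.diagonal_mul_diagonal]
    rw [show (fun i => s i * (s i)⁻¹) = fun _ => (1:ℝ) from
      funext fun i => mul_inv_cancel₀ (ne_of_gt (hspos i))]
    exact Matrix.diagonal_one
  have c1 : ∀ X : Matrix (Fin n) (Fin n) ℝ, S * (Si * X) = X := fun X => by
    rw [← Matrix.mul_assoc, hSSi, Matrix.one_mul]
  have c2 : ∀ X : Matrix (Fin n) (Fin n) ℝ, Qᵀ * (Q * X) = X := fun X => by
    rw [← Matrix.mul_assoc, hQ, Matrix.one_mul]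
  have hSt : Sᵀ = S := by rw [hS, Matrix.diagonal_transpose]
  have hd2 : diagonal d = S * S := by
    rw [hS, Matrix.diagonal_mul_diagonal,
      show (fun i => s i * s i) = d from funext fun i => Real.mul_self_sqrt (hd i).le]
  have dmerge : ∀ (a b : Fin n → ℝ) (X : Matrix (Fin n) (Fin n) ℝ),
      diagonal a * (diagonal b * X) = diagonal (fun i => a i * b i) * X := fun a b X => by
    rw [← Matrix.mul_assoc, Matrix.diagonal_mul_diagonal]
  have key : diagonal d * (1 - W) * Wp
      = (S * Q * diagonal r) * (S * Q * diagonal r)ᵀ := by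
    have e1 : diagonal d * (1 - W) * Wp = diagonal d * Wp - diagonal d * (W * Wp) := by
      rw [Matrix.mul_sub, Matrix.mul_one, Matrix.sub_mul, Matrix.mul_assoc]
    have hdr : (diagonal fun i => r i * r i : Matrix (Fin n) (Fin n) ℝ)
        = diagonal lp - diagonal (fun i => l i * lp i) := by
      rw [show (fun i => r i * r i) = fun i => lp i - l i * lp i from funext fun i => hrr i,
        Matrix.diagonal_sub]
    rw [e1, hW, hWp, hd2]
    simp only [Matrix.transpose_mul, Matrix.diagonal_transpose, Matrix.transpose_transpose,
      hSt, Matrix.mul_assoc, c1, c2, dmerge]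
    rw [hdr, Matrix.sub_mul, Matrix.mul_sub, Matrix.mul_sub]
  constructor
  · rw [key, Matrix.transpose_mul, Matrix.transpose_transpose]
  · intro x
    rw [key]
    set C := S * Q * diagonal r
    have : x ⬝ᵥ (C * Cᵀ) *ᵥ x = (Cᵀ *ᵥ x) ⬝ᵥ (Cᵀ *ᵥ x) := by
      rw [← Matrix.mulVec_mulVec, Matrix.dotProduct_mulVec, Matrix.mulVec_transpose]
    rw [this]
    exact Finset.sum_nonneg fun i _ => mul_self_nonneg _
end

section
/- Let n ≥ 1, let D be an n×n real diagonal matrix with strictly positive diagonal entries, let Q be an n×n real orthogonal matrix, and let Λ be an n×n real diagonal matrix with all diagonal entries in [0,1]. Set W = D^{-1/2} Q Λ Qᵀ D^{1/2} and W⁺ = D^{-1/2} Q Λ⁺ Qᵀ D^{1/2}, where Λ⁺ is the diagonal matrix with Λ⁺_ii = Λ_ii⁻¹ if Λ_ii > 0 and Λ⁺_ii = 0 otherwise. Then the function q : ℝⁿ → ℝ defined by q(x) = (1/2) xᵀ D(I − W)W⁺ x is nonnegative on ℝⁿ and convex on ℝⁿ. -/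
open Matrix

lemma conv_aux (c t a b : ℝ) (hc : 0 ≤ c) (ht0 : 0 ≤ t) (ht1 : t ≤ 1) :
    1/2 * (c * (t * a + (1 - t) * b) ^ 2) ≤ t * (1/2 * (c * a ^ 2)) + (1 - t) * (1/2 * (c * b ^ 2)) := by
  nlinarith [mul_nonneg (mul_nonneg hc (mul_nonneg ht0 (by linarith : (0:ℝ) ≤ 1 - t))) (sq_nonneg (a - b))]

lemma quad_aux {n : ℕ} (B : Matrix (Fin n) (Fin n) ℝ) (m : Fin n → ℝ) (x : Fin n → ℝ) :
    x ⬝ᵥ (Bᵀ * (diagonal m * B)) *ᵥ x = ∑ i, m i * ((B *ᵥ x) i) ^ 2 := by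
  rw [← Matrix.mulVec_mulVec, Matrix.dotProduct_mulVec, Matrix.vecMul_transpose,
    ← Matrix.mulVec_mulVec, dotProduct]
  refine Finset.sum_congr rfl fun i _ => ?_
  rw [Matrix.mulVec_diagonal]
  ring

theorem stmt_1 (n : ℕ) (hn : 1 ≤ n)
    (d l : Fin n → ℝ) (hd : ∀ i, 0 < d i) (hl : ∀ i, 0 ≤ l i ∧ l i ≤ 1)
    (Q W Wp : Matrix (Fin n) (Fin n) ℝ)
    (hQ : Qᵀ * Q = 1)
    (hW : W = diagonal (fun i => (Real.sqrt (d i))⁻¹) * Q * diagonal l * Qᵀ *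
      diagonal (fun i => Real.sqrt (d i)))
    (hWp : Wp = diagonal (fun i => (Real.sqrt (d i))⁻¹) * Q *
      diagonal (fun i => if 0 < l i then (l i)⁻¹ else 0) * Qᵀ *
      diagonal (fun i => Real.sqrt (d i)))
    (q : (Fin n → ℝ) → ℝ)
    (hq : ∀ x, q x = (1 / 2) * (x ⬝ᵥ (diagonal d * (1 - W) * Wp) *ᵥ x)) :
    (∀ x : Fin n → ℝ, 0 ≤ q x) ∧
    (∀ x y : Fin n → ℝ, ∀ t : ℝ, 0 ≤ t → t ≤ 1 →
      q (t • x + (1 - t) • y) ≤ t * q x + (1 - t) * q y) := by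
  set S : Matrix (Fin n) (Fin n) ℝ := diagonal (fun i => Real.sqrt (d i)) with hS
  set Si : Matrix (Fin n) (Fin n) ℝ := diagonal (fun i => (Real.sqrt (d i))⁻¹) with hSi
  set lp : Fin n → ℝ := fun i => if 0 < l i then (l i)⁻¹ else 0 with hlp
  have hsq : ∀ i, 0 < Real.sqrt (d i) := fun i => Real.sqrt_pos.mpr (hd i)
  have hSSi : S * Si = 1 := by
    rw [hS, hSi, diagonal_mul_diagonal,
      show (fun i => Real.sqrt (d i) * (Real.sqrt (d i))⁻¹) = (fun _ : Fin n => (1:ℝ)) from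
        funext fun i => mul_inv_cancel₀ (ne_of_gt (hsq i)), diagonal_one]
  have hDSS : diagonal d = S * S := by
    rw [hS, diagonal_mul_diagonal]
    exact congrArg _ (funext fun i => (Real.mul_self_sqrt (hd i).le).symm)
  set m : Fin n → ℝ := fun i => lp i - l i * lp i with hm
  have hm0 : ∀ i, 0 ≤ m i := by
    intro i
    simp only [hm, hlp]
    split_ifs with h
    · have h1 : 0 ≤ (l i)⁻¹ := inv_nonneg.mpr (hl i).1
      have h2 : l i * (l i)⁻¹ = 1 := mul_inv_cancel₀ (ne_of_gt h)
      have h3 : 1 ≤ (l i)⁻¹ := by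
        rw [← h2]
        nlinarith [(hl i).2]
      linarith
    · simp
  have c1 : ∀ X : Matrix (Fin n) (Fin n) ℝ, S * (Si * X) = X := fun X => by
    rw [← Matrix.mul_assoc, hSSi, Matrix.one_mul]
  have c2 : ∀ X : Matrix (Fin n) (Fin n) ℝ, Qᵀ * (Q * X) = X := fun X => by
    rw [← Matrix.mul_assoc, hQ, Matrix.one_mul]
  have hmd : diagonal m = diagonal lp - diagonal l * diagonal lp := by
    rw [diagonal_mul_diagonal, ← diagonal_sub]
  have key : diagonal d * (1 - W) * Wp = (Qᵀ * S)ᵀ * (diagonal m * (Qᵀ * S)) := by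
    have hTr : (Qᵀ * S)ᵀ = S * Q := by
      rw [transpose_mul, transpose_transpose, hS, diagonal_transpose]
    rw [hTr, hW, hWp, hDSS, Matrix.mul_assoc (S * S), Matrix.sub_mul, Matrix.one_mul,
      Matrix.mul_sub, hmd]
    simp only [Matrix.mul_assoc, Matrix.sub_mul, Matrix.mul_sub, c1, c2]
  have hform : ∀ x, q x = (1/2) * ∑ i, m i * (((Qᵀ * S) *ᵥ x) i) ^ 2 := by
    intro x
    rw [hq, key, quad_aux]
  constructor
  · intro x
    rw [hform]
    refine mul_nonneg (by norm_num) (Finset.sum_nonneg fun i _ => ?_)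
    exact mul_nonneg (hm0 i) (sq_nonneg _)
  · intro x y t ht0 ht1
    rw [hform, hform, hform]
    simp only [Finset.mul_sum]
    rw [← Finset.sum_add_distrib]
    refine Finset.sum_le_sum fun i _ => ?_
    have hlin : ((Qᵀ * S) *ᵥ (t • x + (1 - t) • y)) i
        = t * ((Qᵀ * S) *ᵥ x) i + (1 - t) * ((Qᵀ * S) *ᵥ y) i := by
      rw [Matrix.mulVec_add, Matrix.mulVec_smul, Matrix.mulVec_smul]
      simp
    rw [hlin]
    exact conv_aux (m i) t _ _ (hm0 i) ht0 ht1
end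

section
/- Let n ≥ 1, let D be an n×n real diagonal matrix with strictly positive diagonal entries, let Q be an n×n real orthogonal matrix, and let Λ be an n×n real diagonal matrix with all diagonal entries in [0,1]. Set W = D^{-1/2} Q Λ Qᵀ D^{1/2} and W⁺ = D^{-1/2} Q Λ⁺ Qᵀ D^{1/2}, where Λ⁺ is the diagonal matrix with Λ⁺_ii = Λ_ii⁻¹ if Λ_ii > 0 and Λ⁺_ii = 0 otherwise. Then for every x ∈ ℝⁿ, the vector Wx lies in R(W) and for every z ∈ R(W) one has (1/2)(Wx − x)ᵀ D (Wx − x) + (1/2)(Wx)ᵀ D(I − W)W⁺ (Wx) ≤ (1/2)(z − x)ᵀ D (z − x) + (1/2) zᵀ D(I − W)W⁺ z. That is, W is the scaled proximal operator of the kernel regularizer Φ_W with respect to the D-weighted norm. -/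
open Matrix

theorem stmt_5 (n : ℕ) (hn : 1 ≤ n)
    (d l : Fin n → ℝ) (hd : ∀ i, 0 < d i) (hl : ∀ i, 0 ≤ l i ∧ l i ≤ 1)
    (Q W Wp : Matrix (Fin n) (Fin n) ℝ)
    (hQ : Qᵀ * Q = 1)
    (hW : W = diagonal (fun i => (Real.sqrt (d i))⁻¹) * Q * diagonal l * Qᵀ *
      diagonal (fun i => Real.sqrt (d i)))
    (hWp : Wp = diagonal (fun i => (Real.sqrt (d i))⁻¹) * Q *
      diagonal (fun i => if 0 < l i then (l i)⁻¹ else 0) * Qᵀ *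
      diagonal (fun i => Real.sqrt (d i))) :
    ∀ x : Fin n → ℝ,
      (∃ u : Fin n → ℝ, W *ᵥ u = W *ᵥ x) ∧
      ∀ z : Fin n → ℝ, (∃ u : Fin n → ℝ, W *ᵥ u = z) →
        (1 / 2) * ((W *ᵥ x - x) ⬝ᵥ (diagonal d) *ᵥ (W *ᵥ x - x)) +
          (1 / 2) * ((W *ᵥ x) ⬝ᵥ (diagonal d * (1 - W) * Wp) *ᵥ (W *ᵥ x)) ≤
        (1 / 2) * ((z - x) ⬝ᵥ (diagonal d) *ᵥ (z - x)) +
          (1 / 2) * (z ⬝ᵥ (diagonal d * (1 - W) * Wp) *ᵥ z) := by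
  intro x
  refine ⟨⟨x, rfl⟩, ?_⟩
  rintro z ⟨u, rfl⟩
  set S : Matrix (Fin n) (Fin n) ℝ := diagonal (fun i => Real.sqrt (d i)) with hSdef
  set Si : Matrix (Fin n) (Fin n) ℝ := diagonal (fun i => (Real.sqrt (d i))⁻¹) with hSidef
  have hsq : ∀ i, Real.sqrt (d i) ≠ 0 := fun i => (Real.sqrt_pos.mpr (hd i)).ne'
  have hSSi : S * Si = 1 := by
    rw [hSdef, hSidef, diagonal_mul_diagonal,
      show (fun i => Real.sqrt (d i) * (Real.sqrt (d i))⁻¹) = fun _ => (1:ℝ) from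
        funext fun i => mul_inv_cancel₀ (hsq i), diagonal_one]
  have hSiS : Si * S = 1 := by
    rw [hSidef, hSdef, diagonal_mul_diagonal,
      show (fun i => (Real.sqrt (d i))⁻¹ * Real.sqrt (d i)) = fun _ => (1:ℝ) from
        funext fun i => inv_mul_cancel₀ (hsq i), diagonal_one]
  have hSS : S * S = diagonal d := by
    rw [hSdef, diagonal_mul_diagonal,
      show (fun i => Real.sqrt (d i) * Real.sqrt (d i)) = d from
        funext fun i => Real.mul_self_sqrt (hd i).le]
  have hQQt : Q * Qᵀ = 1 := mul_eq_one_comm.mp hQ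
  have cS : ∀ X : Matrix (Fin n) (Fin n) ℝ, S * (Si * X) = X := fun X => by
    rw [← Matrix.mul_assoc, hSSi, Matrix.one_mul]
  have cSi : ∀ X : Matrix (Fin n) (Fin n) ℝ, Si * (S * X) = X := fun X => by
    rw [← Matrix.mul_assoc, hSiS, Matrix.one_mul]
  have cQt : ∀ X : Matrix (Fin n) (Fin n) ℝ, Qᵀ * (Q * X) = X := fun X => by
    rw [← Matrix.mul_assoc, hQ, Matrix.one_mul]
  have cQ : ∀ X : Matrix (Fin n) (Fin n) ℝ, Q * (Qᵀ * X) = X := fun X => by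
    rw [← Matrix.mul_assoc, hQQt, Matrix.one_mul]
  have cD : ∀ (a b : Fin n → ℝ) (X : Matrix (Fin n) (Fin n) ℝ),
      diagonal a * (diagonal b * X) = diagonal (fun i => a i * b i) * X := fun a b X => by
    rw [← Matrix.mul_assoc, diagonal_mul_diagonal]
  set g : Fin n → ℝ := fun i => (1 - l i) * (if 0 < l i then (l i)⁻¹ else 0) with hgdef
  -- the regularizer matrix
  have hA : diagonal d * (1 - W) * Wp = S * Q * diagonal g * Qᵀ * S := by
    have h1W : 1 - W = Si * Q * diagonal (fun i => 1 - l i) * Qᵀ * S := by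
      have hdl : diagonal (fun i => 1 - l i) = 1 - diagonal l := by
        rw [← diagonal_one, diagonal_sub]
      rw [hW, hdl]
      simp only [Matrix.mul_sub, Matrix.sub_mul, Matrix.mul_one]
      congr 1
      simp only [Matrix.mul_assoc, cQ, cSi]
      exact hSiS.symm
    rw [h1W, hWp, ← hSS]
    simp only [Matrix.mul_assoc, cS, cSi, cQt, cQ, cD]
    rfl
  have hDd : diagonal d = S * Q * diagonal (fun _ => (1:ℝ)) * Qᵀ * S := by
    rw [← hSS]
    simp only [Matrix.mul_assoc, diagonal_one, Matrix.one_mul, cQ]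
  -- quadratic form reduction
  have key : ∀ (f : Fin n → ℝ) (a : Fin n → ℝ),
      a ⬝ᵥ (S * Q * diagonal f * Qᵀ * S) *ᵥ a
        = ∑ i, f i * ((Qᵀ *ᵥ (S *ᵥ a)) i)^2 := by
    intro f a
    have hvS : a ᵥ* S = S *ᵥ a := by
      funext i; rw [hSdef]; simp [vecMul_diagonal, mulVec_diagonal, mul_comm]
    have hvQ : (S *ᵥ a) ᵥ* Q = Qᵀ *ᵥ (S *ᵥ a) := by
      simpa using vecMul_transpose Qᵀ (S *ᵥ a)
    have h1 : (S * Q * diagonal f * Qᵀ * S) *ᵥ a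
        = S *ᵥ (Q *ᵥ (diagonal f *ᵥ (Qᵀ *ᵥ (S *ᵥ a)))) := by
      simp only [Matrix.mulVec_mulVec, Matrix.mul_assoc]
    rw [h1, dotProduct_mulVec, hvS, dotProduct_mulVec, hvQ]
    simp only [dotProduct, mulVec_diagonal]
    exact Finset.sum_congr rfl fun i _ => by ring
  -- action of W in the transformed coordinates
  have vS : ∀ y : Fin n → ℝ, S *ᵥ (Si *ᵥ y) = y := fun y => by
    rw [Matrix.mulVec_mulVec, hSSi, Matrix.one_mulVec]
  have vQt : ∀ y : Fin n → ℝ, Qᵀ *ᵥ (Q *ᵥ y) = y := fun y => by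
    rw [Matrix.mulVec_mulVec, hQ, Matrix.one_mulVec]
  have hpW : ∀ v : Fin n → ℝ,
      Qᵀ *ᵥ (S *ᵥ (W *ᵥ v)) = fun i => l i * (Qᵀ *ᵥ (S *ᵥ v)) i := by
    intro v
    funext i
    rw [hW]
    simp only [← Matrix.mulVec_mulVec, vS, vQt, mulVec_diagonal]
  have hp_sub : ∀ a b : Fin n → ℝ,
      Qᵀ *ᵥ (S *ᵥ (a - b)) = Qᵀ *ᵥ (S *ᵥ a) - Qᵀ *ᵥ (S *ᵥ b) := by
    intro a b; simp [Matrix.mulVec_sub]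
  set w : Fin n → ℝ := Qᵀ *ᵥ (S *ᵥ x) with hwdef
  set t : Fin n → ℝ := Qᵀ *ᵥ (S *ᵥ u) with htdef
  rw [hA, hDd, key, key, key, key, hp_sub, hp_sub, hpW, hpW]
  rw [Finset.mul_sum, Finset.mul_sum, Finset.mul_sum, Finset.mul_sum,
    ← Finset.sum_add_distrib, ← Finset.sum_add_distrib]
  apply Finset.sum_le_sum
  intro i _
  simp only [Pi.sub_apply, one_mul, hgdef]
  by_cases h : 0 < l i
  · rw [if_pos h]
    have h1 : l i ≤ 1 := (hl i).2
    have hgl : ∀ c : ℝ, (1 - l i) * (l i)⁻¹ * (l i * c)^2 = (1 - l i) * l i * c^2 := by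
      intro c; field_simp
    rw [hgl, hgl]
    nlinarith [mul_nonneg h.le (sq_nonneg (t i - w i))]
  · have h0 : l i = 0 := le_antisymm (not_lt.mp h) (hl i).1
    rw [if_neg h, h0]
    simp
end

section
/- Let n ≥ 1, let D be an n×n real diagonal matrix with strictly positive diagonal entries, let Q be an n×n real orthogonal matrix, and let Λ be an n×n real diagonal matrix with all diagonal entries in [0,1]. Set W = D^{-1/2} Q Λ Qᵀ D^{1/2} and W⁺ = D^{-1/2} Q Λ⁺ Qᵀ D^{1/2}, where Λ⁺ is the diagonal matrix with Λ⁺_ii = Λ_ii⁻¹ if Λ_ii > 0 and Λ⁺_ii = 0 otherwise. Then for every x ∈ ℝⁿ, Wx is the UNIQUE minimizer over z ∈ R(W) of the function z ↦ (1/2)(z − x)ᵀ D (z − x) + (1/2) zᵀ D(I − W)W⁺ z: if z ∈ R(W) satisfies (1/2)(z − x)ᵀ D (z − x) + (1/2) zᵀ D(I − W)W⁺ z ≤ (1/2)(Wx − x)ᵀ D (Wx − x) + (1/2)(Wx)ᵀ D(I − W)W⁺ (Wx), then z = Wx. -/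
open Matrix

theorem stmt_6 (n : ℕ) (hn : 1 ≤ n)
    (d l : Fin n → ℝ) (hd : ∀ i, 0 < d i) (hl : ∀ i, 0 ≤ l i ∧ l i ≤ 1)
    (Q W Wp : Matrix (Fin n) (Fin n) ℝ)
    (hQ : Qᵀ * Q = 1)
    (hW : W = diagonal (fun i => (Real.sqrt (d i))⁻¹) * Q * diagonal l * Qᵀ *
      diagonal (fun i => Real.sqrt (d i)))
    (hWp : Wp = diagonal (fun i => (Real.sqrt (d i))⁻¹) * Q *
      diagonal (fun i => if 0 < l i then (l i)⁻¹ else 0) * Qᵀ *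
      diagonal (fun i => Real.sqrt (d i))) :
    ∀ x z : Fin n → ℝ, (∃ u : Fin n → ℝ, W *ᵥ u = z) →
      (1 / 2) * ((z - x) ⬝ᵥ (diagonal d) *ᵥ (z - x)) +
          (1 / 2) * (z ⬝ᵥ (diagonal d * (1 - W) * Wp) *ᵥ z) ≤
        (1 / 2) * ((W *ᵥ x - x) ⬝ᵥ (diagonal d) *ᵥ (W *ᵥ x - x)) +
          (1 / 2) * ((W *ᵥ x) ⬝ᵥ (diagonal d * (1 - W) * Wp) *ᵥ (W *ᵥ x)) →
      z = W *ᵥ x := by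
  intro x z hz hle
  obtain ⟨u, hu⟩ := hz
  set lp : Fin n → ℝ := fun i => if 0 < l i then (l i)⁻¹ else 0 with hlp
  set S : Matrix (Fin n) (Fin n) ℝ := diagonal (fun i => Real.sqrt (d i)) with hS
  set S' : Matrix (Fin n) (Fin n) ℝ := diagonal (fun i => (Real.sqrt (d i))⁻¹) with hS'
  have hs0 : ∀ i, Real.sqrt (d i) ≠ 0 := fun i => (Real.sqrt_pos.2 (hd i)).ne'
  have hSS' : S * S' = 1 := by
    rw [hS, hS', diagonal_mul_diagonal]
    have : (fun i => Real.sqrt (d i) * (Real.sqrt (d i))⁻¹) = fun _ : Fin n => (1:ℝ) :=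
      funext fun i => mul_inv_cancel₀ (hs0 i)
    rw [this, diagonal_one]
  have hS'S : S' * S = 1 := by
    rw [hS, hS', diagonal_mul_diagonal]
    have : (fun i => (Real.sqrt (d i))⁻¹ * Real.sqrt (d i)) = fun _ : Fin n => (1:ℝ) :=
      funext fun i => inv_mul_cancel₀ (hs0 i)
    rw [this, diagonal_one]
  have hD : diagonal d = S * S := by
    rw [hS, diagonal_mul_diagonal]
    have : d = fun i => Real.sqrt (d i) * Real.sqrt (d i) :=
      funext fun i => (Real.mul_self_sqrt (hd i).le).symm
    rw [← this]
  have hQQ : Q * Qᵀ = 1 := mul_eq_one_comm.mp hQ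
  -- matrix-level cancellation helpers
  have cSS' : ∀ X : Matrix (Fin n) (Fin n) ℝ, S * (S' * X) = X := fun X => by
    rw [← Matrix.mul_assoc, hSS', Matrix.one_mul]
  have cQtQ : ∀ X : Matrix (Fin n) (Fin n) ℝ, Qᵀ * (Q * X) = X := fun X => by
    rw [← Matrix.mul_assoc, hQ, Matrix.one_mul]
  -- vector-level cancellation helpers
  have vSS' : ∀ w : Fin n → ℝ, S *ᵥ (S' *ᵥ w) = w := fun w => by
    rw [mulVec_mulVec, hSS', one_mulVec]
  have vS'S : ∀ w : Fin n → ℝ, S' *ᵥ (S *ᵥ w) = w := fun w => by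
    rw [mulVec_mulVec, hS'S, one_mulVec]
  have vQtQ : ∀ w : Fin n → ℝ, Qᵀ *ᵥ (Q *ᵥ w) = w := fun w => by
    rw [mulVec_mulVec, hQ, one_mulVec]
  have vQQt : ∀ w : Fin n → ℝ, Q *ᵥ (Qᵀ *ᵥ w) = w := fun w => by
    rw [mulVec_mulVec, hQQ, one_mulVec]
  -- dot product symmetry for diagonal and orthogonality
  have dS : ∀ a b : Fin n → ℝ, a ⬝ᵥ (S *ᵥ b) = (S *ᵥ a) ⬝ᵥ b := by
    intro a b
    simp only [dotProduct, hS, mulVec_diagonal]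
    exact Finset.sum_congr rfl fun i _ => by ring
  have dQ : ∀ a b : Fin n → ℝ, (Q *ᵥ a) ⬝ᵥ (Q *ᵥ b) = a ⬝ᵥ b := by
    intro a b
    rw [dotProduct_mulVec, ← mulVec_transpose, vQtQ]
  -- the key matrix identity
  have hK : diagonal d * (1 - W) * Wp
      = S * (Q * (diagonal (fun i => (1 - l i) * lp i) * (Qᵀ * S))) := by
    have hE : diagonal (fun i => (1 - l i) * lp i)
        = diagonal lp - diagonal (fun i => l i * lp i) := by
      ext i j
      by_cases h : i = j
      · subst h; simp [diagonal_apply_eq]; ring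
      · simp [diagonal_apply_ne _ h]
    rw [Matrix.mul_assoc, Matrix.sub_mul, Matrix.one_mul, Matrix.mul_sub, hE,
      Matrix.sub_mul, Matrix.mul_sub, Matrix.mul_sub]
    congr 1
    · rw [hWp, hD]
      simp only [Matrix.mul_assoc]
      rw [cSS']
    · rw [hW, hWp, hD]
      simp only [Matrix.mul_assoc]
      rw [cSS', cSS', cQtQ, ← Matrix.mul_assoc (diagonal l), diagonal_mul_diagonal]
  set v : Fin n → ℝ := Qᵀ *ᵥ (S *ᵥ u) with hv
  set c : Fin n → ℝ := Qᵀ *ᵥ (S *ᵥ x) with hc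
  have hSx : S *ᵥ x = Q *ᵥ c := by rw [hc, vQQt]
  have hSz : S *ᵥ z = Q *ᵥ (fun i => l i * v i) := by
    rw [← hu, hW]
    simp only [← mulVec_mulVec]
    rw [vSS']
    have : diagonal l *ᵥ v = fun i => l i * v i := funext fun i => mulVec_diagonal l v i
    rw [this]
  have hSWx : S *ᵥ (W *ᵥ x) = Q *ᵥ (fun i => l i * c i) := by
    rw [hW]
    simp only [← mulVec_mulVec]
    rw [vSS']
    have : diagonal l *ᵥ c = fun i => l i * c i := funext fun i => mulVec_diagonal l c i
    rw [this]
  -- first quadratic terms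
  have hT1 : ∀ w a : Fin n → ℝ, S *ᵥ w = Q *ᵥ a →
      (w - x) ⬝ᵥ (diagonal d) *ᵥ (w - x) = ∑ i, (a i - c i)^2 := by
    intro w a hw
    rw [hD, ← mulVec_mulVec, dS]
    have : S *ᵥ (w - x) = Q *ᵥ (a - c) := by
      rw [mulVec_sub, mulVec_sub, hw, hSx]
    rw [this, dQ]
    simp only [dotProduct, Pi.sub_apply]
    exact Finset.sum_congr rfl fun i _ => by ring
  -- second quadratic terms
  have hT2 : ∀ w b : Fin n → ℝ, S *ᵥ w = Q *ᵥ (fun i => l i * b i) →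
      w ⬝ᵥ (diagonal d * (1 - W) * Wp) *ᵥ w = ∑ i, l i * (1 - l i) * (b i)^2 := by
    intro w b hw
    rw [hK]
    simp only [← mulVec_mulVec]
    rw [dS, hw, vQtQ, dQ]
    simp only [dotProduct, mulVec_diagonal]
    refine Finset.sum_congr rfl fun i _ => ?_
    by_cases h : 0 < l i
    · rw [hlp]
      simp only [if_pos h]
      field_simp
    · have h0 : l i = 0 := le_antisymm (not_lt.mp h) (hl i).1
      simp [h0]
  have e1 := hT1 z (fun i => l i * v i) hSz
  have e2 := hT2 z v hSz
  have e3 := hT1 (W *ᵥ x) (fun i => l i * c i) hSWx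
  have e4 := hT2 (W *ᵥ x) c hSWx
  rw [e1, e2, e3, e4] at hle
  -- extract nonneg sum ≤ 0
  have hsum : ∑ i, l i * (v i - c i)^2 ≤ 0 := by
    have key : ∑ i, l i * (v i - c i)^2
        = (∑ i, (l i * v i - c i)^2 + ∑ i, l i * (1 - l i) * (v i)^2)
          - (∑ i, (l i * c i - c i)^2 + ∑ i, l i * (1 - l i) * (c i)^2) := by
      rw [← Finset.sum_add_distrib, ← Finset.sum_add_distrib, ← Finset.sum_sub_distrib]
      exact Finset.sum_congr rfl fun i _ => by ring
    rw [key]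
    linarith
  have hzero : ∀ i, l i * (v i - c i)^2 = 0 := by
    have hnn : ∀ i ∈ Finset.univ, (0:ℝ) ≤ l i * (v i - c i)^2 :=
      fun i _ => mul_nonneg (hl i).1 (sq_nonneg _)
    have := le_antisymm hsum (Finset.sum_nonneg hnn)
    intro i
    exact (Finset.sum_eq_zero_iff_of_nonneg hnn).mp this i (Finset.mem_univ i)
  have hlv : ∀ i, l i * v i = l i * c i := by
    intro i
    rcases mul_eq_zero.mp (hzero i) with h | h
    · rw [h, zero_mul, zero_mul]
    · have : v i = c i := sub_eq_zero.mp (pow_eq_zero_iff two_ne_zero |>.mp h)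
      rw [this]
  have : S *ᵥ z = S *ᵥ (W *ᵥ x) := by
    rw [hSz, hSWx]
    exact congrArg (fun a => Q *ᵥ a) (funext hlv)
  calc z = S' *ᵥ (S *ᵥ z) := (vS'S z).symm
    _ = S' *ᵥ (S *ᵥ (W *ᵥ x)) := by rw [this]
    _ = W *ᵥ x := vS'S _
end

section
/- Let n ≥ 1, let D be an n×n real diagonal matrix with strictly positive diagonal entries, let Q be an n×n real orthogonal matrix, and let Λ be an n×n real diagonal matrix with all diagonal entries in [0,1]. Set W = D^{-1/2} Q Λ Qᵀ D^{1/2}. Then the matrix Wᵀ D (I − W) is symmetric and positive semidefinite. -/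
open Matrix

theorem stmt_9 (n : ℕ) (hn : 1 ≤ n)
    (d l : Fin n → ℝ) (hd : ∀ i, 0 < d i) (hl : ∀ i, 0 ≤ l i ∧ l i ≤ 1)
    (Q W : Matrix (Fin n) (Fin n) ℝ)
    (hQ : Qᵀ * Q = 1)
    (hW : W = diagonal (fun i => (Real.sqrt (d i))⁻¹) * Q * diagonal l * Qᵀ *
      diagonal (fun i => Real.sqrt (d i))) :
    (Wᵀ * diagonal d * (1 - W))ᵀ = Wᵀ * diagonal d * (1 - W) ∧
    ∀ x : Fin n → ℝ, 0 ≤ x ⬝ᵥ (Wᵀ * diagonal d * (1 - W)) *ᵥ x := by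
  have hdnn : ∀ i, (0:ℝ) ≤ d i := fun i => (hd i).le
  have hsne : ∀ i, Real.sqrt (d i) ≠ 0 := fun i => ne_of_gt (Real.sqrt_pos.2 (hd i))
  set B : Matrix (Fin n) (Fin n) ℝ := diagonal (fun i => Real.sqrt (d i)) * Q with hB
  set m : Fin n → ℝ := fun i => l i * (1 - l i) with hm'
  have key : Wᵀ * diagonal d * (1 - W) = B * diagonal m * Bᵀ := by
    have h1 : diagonal (fun i => (Real.sqrt (d i))⁻¹) * diagonal d
        = diagonal (fun i => Real.sqrt (d i)) := by
      rw [diagonal_mul_diagonal]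
      congr 1
      funext i
      field_simp
      rw [div_eq_iff (hsne i), Real.mul_self_sqrt (hdnn i)]
    have h3 : ∀ X : Matrix (Fin n) (Fin n) ℝ,
        diagonal d * ((diagonal fun i => (Real.sqrt (d i))⁻¹) * X)
          = diagonal (fun i => Real.sqrt (d i)) * X := by
      intro X
      rw [← Matrix.mul_assoc, diagonal_mul_diagonal]
      congr 2
      funext i
      field_simp
      rw [div_eq_iff (hsne i), Real.mul_self_sqrt (hdnn i)]
    have h4 : ∀ X : Matrix (Fin n) (Fin n) ℝ,
        (diagonal fun i => Real.sqrt (d i)) *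
          ((diagonal fun i => (Real.sqrt (d i))⁻¹) * X) = X := by
      intro X
      rw [← Matrix.mul_assoc, diagonal_mul_diagonal,
        show (fun i => Real.sqrt (d i) * (Real.sqrt (d i))⁻¹) = fun _ => (1:ℝ) from
          funext fun i => mul_inv_cancel₀ (hsne i), diagonal_one, Matrix.one_mul]
    have h5 : ∀ X : Matrix (Fin n) (Fin n) ℝ, Qᵀ * (Q * X) = X := by
      intro X; rw [← Matrix.mul_assoc, hQ, Matrix.one_mul]
    have hm : diagonal m = diagonal l - diagonal l * diagonal l := by
      rw [diagonal_mul_diagonal,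
        show m = (fun i => l i) - fun i => l i * l i from
          funext fun i => by simp [hm']; ring, diagonal_sub]
      rfl
    subst hW
    rw [hm, hB]
    simp only [transpose_mul, diagonal_transpose, transpose_transpose, mul_sub, sub_mul, mul_one,
      Matrix.mul_assoc, h1, h3, h4, h5]
  rw [key]
  constructor
  · simp [transpose_mul, transpose_transpose, diagonal_transpose, Matrix.mul_assoc]
  · intro x
    have hquad : x ⬝ᵥ (B * diagonal m * Bᵀ) *ᵥ x
        = (Bᵀ *ᵥ x) ⬝ᵥ diagonal m *ᵥ (Bᵀ *ᵥ x) := by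
      rw [← mulVec_mulVec, ← mulVec_mulVec, Matrix.dotProduct_mulVec, Matrix.mulVec_transpose]
    rw [hquad]
    rw [dotProduct]
    apply Finset.sum_nonneg
    intro i _
    rw [mulVec_diagonal]
    have hmnn : 0 ≤ m i := mul_nonneg (hl i).1 (by linarith [(hl i).2])
    calc (0:ℝ) ≤ m i * ((Bᵀ *ᵥ x) i * (Bᵀ *ᵥ x) i) := mul_nonneg hmnn (mul_self_nonneg _)
      _ = (Bᵀ *ᵥ x) i * (m i * (Bᵀ *ᵥ x) i) := by ring
end

section
/- Let n, m ≥ 1, let D be an n×n real diagonal matrix with strictly positive diagonal entries, let Q be an n×n real orthogonal matrix, and let Λ be an n×n real diagonal matrix with all diagonal entries in [0,1]. Set W = D^{-1/2} Q Λ Qᵀ D^{1/2}. Let F be any m×n real matrix, y ∈ ℝᵐ, and ρ > 0. Define A = Wᵀ Fᵀ F W + ρ Wᵀ D (I − W) and b = Wᵀ Fᵀ y. Then the linear system A z = b is solvable: there exists z ∈ ℝⁿ with A z = b. -/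
open Matrix

local notation "⟪" x ", " y "⟫" => @inner ℝ _ _ x y

lemma aux_solvable {n m k : ℕ} (M : Matrix (Fin m) (Fin n) ℝ)
    (N : Matrix (Fin k) (Fin n) ℝ) (y : Fin m → ℝ) :
    ∃ z : Fin n → ℝ, (Mᵀ * M + Nᵀ * N) *ᵥ z = Mᵀ *ᵥ y := by
  set A : Matrix (Fin n) (Fin n) ℝ := Mᵀ * M + Nᵀ * N with hAdef
  have hsymm : Aᵀ = A := by
    simp [hAdef, transpose_add, transpose_mul]
  let T : EuclideanSpace ℝ (Fin n) →ₗ[ℝ] EuclideanSpace ℝ (Fin n) :=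
    { toFun := fun x => WithLp.toLp 2 (A *ᵥ x)
      map_add' := fun x y => by ext1; simp [mulVec_add]
      map_smul' := fun c x => by ext1; simp [mulVec_smul] }
  have hinner : ∀ u v : EuclideanSpace ℝ (Fin n), ⟪u, v⟫ = u ⬝ᵥ v := by
    intro u v
    simp [PiLp.inner_apply, dotProduct, RCLike.inner_apply, mul_comm]
  have hTapp : ∀ x : EuclideanSpace ℝ (Fin n), T x = A *ᵥ x := fun _ => rfl
  have hker : ∀ x : EuclideanSpace ℝ (Fin n), T x = 0 → M *ᵥ x = 0 ∧ N *ᵥ x = 0 := by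
    intro x hx
    have h0 : (x : Fin n → ℝ) ⬝ᵥ (A *ᵥ x) = 0 := by
      rw [show A *ᵥ x = 0 from congrArg WithLp.ofLp hx]; simp
    have hexp : (x : Fin n → ℝ) ⬝ᵥ (A *ᵥ x)
        = (M *ᵥ x) ⬝ᵥ (M *ᵥ x) + (N *ᵥ x) ⬝ᵥ (N *ᵥ x) := by
      rw [hAdef, add_mulVec, dotProduct_add]
      congr 1 <;> rw [← Matrix.mulVec_mulVec, dotProduct_mulVec, vecMul_transpose]
    rw [hexp] at h0
    have hMn : 0 ≤ (M *ᵥ x) ⬝ᵥ (M *ᵥ x) :=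
      Finset.sum_nonneg fun i _ => mul_self_nonneg _
    have hNn : 0 ≤ (N *ᵥ x) ⬝ᵥ (N *ᵥ x) :=
      Finset.sum_nonneg fun i _ => mul_self_nonneg _
    have h1 : (M *ᵥ x) ⬝ᵥ (M *ᵥ x) = 0 ∧ (N *ᵥ x) ⬝ᵥ (N *ᵥ x) = 0 := by
      constructor <;> linarith
    exact ⟨dotProduct_self_eq_zero.mp h1.1, dotProduct_self_eq_zero.mp h1.2⟩
  have hsym2 : ∀ u v : EuclideanSpace ℝ (Fin n), ⟪T u, v⟫ = ⟪u, T v⟫ := by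
    intro u v
    rw [hinner, hinner, hTapp, hTapp]
    conv_rhs => rw [dotProduct_mulVec, ← hsymm, vecMul_transpose]
  have hrk : (LinearMap.range T)ᗮ = LinearMap.ker T := by
    ext x
    simp only [Submodule.mem_orthogonal, LinearMap.mem_range, LinearMap.mem_ker,
      forall_exists_index]
    constructor
    · intro h
      have h3 : ⟪T (T x), x⟫ = 0 := h _ _ rfl
      have h2 : ⟪T x, T x⟫ = 0 := (hsym2 (T x) x).symm.trans h3
      exact inner_self_eq_zero.mp h2
    · intro h u v hv
      rw [← hv, hsym2, h, inner_zero_right]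
  have hbmem : (WithLp.toLp 2 (Mᵀ *ᵥ y) : EuclideanSpace ℝ (Fin n)) ∈ LinearMap.range T := by
    rw [← Submodule.orthogonal_orthogonal (LinearMap.range T), hrk]
    intro x hx
    have hx0 : M *ᵥ x = 0 := (hker x hx).1
    rw [hinner]
    calc (x : Fin n → ℝ) ⬝ᵥ (Mᵀ *ᵥ y) = (M *ᵥ x) ⬝ᵥ y := by
          rw [dotProduct_mulVec, vecMul_transpose]
      _ = 0 := by rw [hx0, zero_dotProduct]
  obtain ⟨z, hz⟩ := hbmem
  exact ⟨z, congrArg WithLp.ofLp hz⟩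

theorem stmt_10 (n m : ℕ) (hn : 1 ≤ n) (hm : 1 ≤ m)
    (d l : Fin n → ℝ) (hd : ∀ i, 0 < d i) (hl : ∀ i, 0 ≤ l i ∧ l i ≤ 1)
    (Q W : Matrix (Fin n) (Fin n) ℝ)
    (hQ : Qᵀ * Q = 1)
    (hW : W = diagonal (fun i => (Real.sqrt (d i))⁻¹) * Q * diagonal l * Qᵀ *
      diagonal (fun i => Real.sqrt (d i)))
    (F : Matrix (Fin m) (Fin n) ℝ) (y : Fin m → ℝ) (ρ : ℝ) (hρ : 0 < ρ)
    (A : Matrix (Fin n) (Fin n) ℝ) (b : Fin n → ℝ)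
    (hA : A = Wᵀ * Fᵀ * F * W + ρ • (Wᵀ * diagonal d * (1 - W)))
    (hb : b = (Wᵀ * Fᵀ) *ᵥ y) :
    ∃ z : Fin n → ℝ, A *ᵥ z = b := by
  set E : Matrix (Fin n) (Fin n) ℝ := diagonal (fun i => Real.sqrt (d i)) with hE
  set E' : Matrix (Fin n) (Fin n) ℝ := diagonal (fun i => (Real.sqrt (d i))⁻¹) with hE'
  set L : Matrix (Fin n) (Fin n) ℝ := diagonal l with hL
  set S : Matrix (Fin n) (Fin n) ℝ :=
    diagonal (fun i => Real.sqrt (ρ * (l i * (1 - l i)))) with hS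
  have hEt : Eᵀ = E := by rw [hE, diagonal_transpose]
  have hE't : E'ᵀ = E' := by rw [hE', diagonal_transpose]
  have hLt : Lᵀ = L := by rw [hL, diagonal_transpose]
  have hSt : Sᵀ = S := by rw [hS, diagonal_transpose]
  have hsd : ∀ i, Real.sqrt (d i) ≠ 0 := fun i =>
    ne_of_gt (Real.sqrt_pos.mpr (hd i))
  have hEE' : ∀ X : Matrix (Fin n) (Fin n) ℝ, E * (E' * X) = X := by
    intro X
    rw [← Matrix.mul_assoc, hE, hE', diagonal_mul_diagonal]
    have : (fun i => Real.sqrt (d i) * (Real.sqrt (d i))⁻¹) = fun _ : Fin n => (1:ℝ) := by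
      funext i; exact mul_inv_cancel₀ (hsd i)
    rw [this, diagonal_one, Matrix.one_mul]
  have hQtQ : ∀ X : Matrix (Fin n) (Fin n) ℝ, Qᵀ * (Q * X) = X := by
    intro X; rw [← Matrix.mul_assoc, hQ, Matrix.one_mul]
  have hE'D : E' * diagonal d = E := by
    rw [hE', hE, diagonal_mul_diagonal]
    have hfun : (fun i => (Real.sqrt (d i))⁻¹ * d i) = fun i => Real.sqrt (d i) := by
      funext i
      rw [← Real.mul_self_sqrt (le_of_lt (hd i))]
      rw [Real.sqrt_mul_self (Real.sqrt_nonneg _), ← mul_assoc, inv_mul_cancel₀ (hsd i), one_mul]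
    rw [hfun]
  have hSS : S * S = diagonal (fun i => ρ * (l i * (1 - l i))) := by
    rw [hS, diagonal_mul_diagonal]
    have hfun : (fun i => Real.sqrt (ρ * (l i * (1 - l i))) * Real.sqrt (ρ * (l i * (1 - l i))))
        = fun i => ρ * (l i * (1 - l i)) := by
      funext i
      exact Real.mul_self_sqrt (mul_nonneg (le_of_lt hρ)
        (mul_nonneg (hl i).1 (by linarith [(hl i).2])))
    rw [hfun]
  set N : Matrix (Fin n) (Fin n) ℝ := S * (Qᵀ * E) with hN
  set M : Matrix (Fin m) (Fin n) ℝ := F * W with hM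
  have h1 : Mᵀ * M = Wᵀ * Fᵀ * F * W := by
    rw [hM, transpose_mul, Matrix.mul_assoc, Matrix.mul_assoc, Matrix.mul_assoc]
  have hWD : Wᵀ * diagonal d = E * (Q * (L * (Qᵀ * E))) := by
    rw [hW]
    simp only [transpose_mul, transpose_transpose, Matrix.mul_assoc, hEt, hE't, hLt]
    rw [hE'D]
  have hWDW : Wᵀ * diagonal d * W = E * (Q * (L * (L * (Qᵀ * E)))) := by
    rw [hWD, hW, Matrix.mul_assoc, Matrix.mul_assoc, Matrix.mul_assoc]
    simp only [Matrix.mul_assoc, hEE', hQtQ]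
  have h2 : ρ • (Wᵀ * diagonal d * (1 - W)) = Nᵀ * N := by
    have hNt : Nᵀ * N = E * (Q * ((S * S) * (Qᵀ * E))) := by
      rw [hN]
      simp only [transpose_mul, transpose_transpose, hEt, hSt, Matrix.mul_assoc]
    have hdiag : (diagonal fun i => ρ * (l i * (1 - l i))) = ρ • (L - L * L) := by
      rw [hL, diagonal_mul_diagonal]
      ext i j
      rcases eq_or_ne i j with h | h
      · subst h
        simp only [Matrix.smul_apply, Matrix.sub_apply, diagonal_apply_eq, smul_eq_mul]
        ring
      · simp [Matrix.smul_apply, Matrix.sub_apply, diagonal_apply_ne _ h]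
    rw [Matrix.mul_sub, Matrix.mul_one, hWDW, hWD, hNt, hSS, hdiag]
    simp only [smul_mul_assoc, Matrix.sub_mul, mul_smul_comm, smul_sub,
      Matrix.mul_sub, Matrix.mul_assoc]
  obtain ⟨z, hz⟩ := aux_solvable M N y
  refine ⟨z, ?_⟩
  rw [hA, ← h1, h2, hb, ← transpose_mul, ← hM]
  exact hz
end

section
/- Let n, m ≥ 1, let D be an n×n real diagonal matrix with strictly positive diagonal entries, let Q be an n×n real orthogonal matrix, and let Λ be an n×n real diagonal matrix with all diagonal entries in [0,1]. Set W = D^{-1/2} Q Λ Qᵀ D^{1/2}. Let F be any m×n real matrix, y ∈ ℝᵐ, and ρ > 0. Define A = Wᵀ Fᵀ F W + ρ Wᵀ D (I − W), b = Wᵀ Fᵀ y, and θ(z) = (1/2)‖y − F W z‖² + (ρ/2) zᵀ Wᵀ D (I − W) z for z ∈ ℝⁿ, where ‖·‖ is the Euclidean norm on ℝᵐ. Then z* ∈ ℝⁿ satisfies A z* = b if and only if z* is a global minimizer of θ, i.e., θ(z*) ≤ θ(z) for all z ∈ ℝⁿ. -/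
open Matrix

private lemma quadform {m n : ℕ} (B C : Matrix (Fin m) (Fin n) ℝ) (v w : Fin n → ℝ) :
    v ⬝ᵥ (Bᵀ * C) *ᵥ w = (B *ᵥ v) ⬝ᵥ (C *ᵥ w) := by
  rw [← Matrix.mulVec_mulVec, Matrix.dotProduct_mulVec, Matrix.vecMul_transpose]

private lemma dp_self_nonneg {k : ℕ} (w : Fin k → ℝ) : 0 ≤ w ⬝ᵥ w :=
  Finset.sum_nonneg fun i _ => mul_self_nonneg _

theorem stmt_11 (n m : ℕ) (hn : 1 ≤ n) (hm : 1 ≤ m)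
    (d l : Fin n → ℝ) (hd : ∀ i, 0 < d i) (hl : ∀ i, 0 ≤ l i ∧ l i ≤ 1)
    (Q W : Matrix (Fin n) (Fin n) ℝ)
    (hQ : Qᵀ * Q = 1)
    (hW : W = diagonal (fun i => (Real.sqrt (d i))⁻¹) * Q * diagonal l * Qᵀ *
      diagonal (fun i => Real.sqrt (d i)))
    (F : Matrix (Fin m) (Fin n) ℝ) (y : Fin m → ℝ) (ρ : ℝ) (hρ : 0 < ρ)
    (A : Matrix (Fin n) (Fin n) ℝ) (b : Fin n → ℝ)
    (hA : A = Wᵀ * Fᵀ * F * W + ρ • (Wᵀ * diagonal d * (1 - W)))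
    (hb : b = (Wᵀ * Fᵀ) *ᵥ y)
    (θ : (Fin n → ℝ) → ℝ)
    (hθ : ∀ z, θ z = (1 / 2) * ((y - (F * W) *ᵥ z) ⬝ᵥ (y - (F * W) *ᵥ z)) +
      (ρ / 2) * (z ⬝ᵥ (Wᵀ * diagonal d * (1 - W)) *ᵥ z)) :
    ∀ zstar : Fin n → ℝ, A *ᵥ zstar = b ↔ ∀ z : Fin n → ℝ, θ zstar ≤ θ z := by
  have hsqrt_pos : ∀ i, 0 < Real.sqrt (d i) := fun i => Real.sqrt_pos.mpr (hd i)
  -- abbreviations (not `set`, to keep simp lemmas working)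
  have hSSi : diagonal (fun i => Real.sqrt (d i)) * diagonal (fun i => (Real.sqrt (d i))⁻¹)
      = (1 : Matrix (Fin n) (Fin n) ℝ) := by
    rw [diagonal_mul_diagonal]
    have : (fun i => Real.sqrt (d i) * (Real.sqrt (d i))⁻¹) = fun _ => (1 : ℝ) := by
      funext i; exact mul_inv_cancel₀ (ne_of_gt (hsqrt_pos i))
    rw [this, diagonal_one]
  have hSiD : diagonal (fun i => (Real.sqrt (d i))⁻¹) * diagonal d
      = diagonal (fun i => Real.sqrt (d i)) := by
    have hfun : (fun i => (Real.sqrt (d i))⁻¹ * d i) = fun i => Real.sqrt (d i) := by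
      funext i
      have hne : Real.sqrt (d i) ≠ 0 := ne_of_gt (hsqrt_pos i)
      field_simp
      rw [Real.sq_sqrt (le_of_lt (hd i))]
    rw [diagonal_mul_diagonal, hfun]
  have hWT : Wᵀ = diagonal (fun i => Real.sqrt (d i)) * Q * diagonal l * Qᵀ *
      diagonal (fun i => (Real.sqrt (d i))⁻¹) := by
    rw [hW]
    simp [Matrix.transpose_mul, Matrix.mul_assoc]
  have h1 : Wᵀ * diagonal d = diagonal (fun i => Real.sqrt (d i)) * Q * diagonal l * Qᵀ *
      diagonal (fun i => Real.sqrt (d i)) := by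
    rw [hWT, Matrix.mul_assoc _ (diagonal fun i => (Real.sqrt (d i))⁻¹) (diagonal d), hSiD]
  have h2 : Wᵀ * diagonal d * W = diagonal (fun i => Real.sqrt (d i)) * Q *
      (diagonal l * diagonal l) * Qᵀ * diagonal (fun i => Real.sqrt (d i)) := by
    rw [h1, hW]
    simp only [Matrix.mul_assoc]
    rw [← Matrix.mul_assoc (diagonal fun i => Real.sqrt (d i))
      (diagonal fun i => (Real.sqrt (d i))⁻¹), hSSi, Matrix.one_mul,
      ← Matrix.mul_assoc Qᵀ Q, hQ, Matrix.one_mul]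
  have hM : Wᵀ * diagonal d * (1 - W) = diagonal (fun i => Real.sqrt (d i)) * Q *
      diagonal (fun i => l i - l i * l i) * Qᵀ * diagonal (fun i => Real.sqrt (d i)) := by
    rw [Matrix.mul_sub, Matrix.mul_one, h2, h1]
    have hdiag : diagonal (fun i => l i - l i * l i) = diagonal l - diagonal l * diagonal l := by
      rw [diagonal_mul_diagonal, ← diagonal_sub]
    rw [hdiag]
    simp only [Matrix.mul_sub, Matrix.sub_mul]
  -- symmetry of A
  have hBT : (Wᵀ * Fᵀ * F * W)ᵀ = Wᵀ * Fᵀ * F * W := by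
    simp [Matrix.transpose_mul, Matrix.mul_assoc]
  have hMT : (Wᵀ * diagonal d * (1 - W))ᵀ = Wᵀ * diagonal d * (1 - W) := by
    rw [hM]
    simp [Matrix.transpose_mul, Matrix.mul_assoc]
  have hAT : Aᵀ = A := by
    rw [hA, Matrix.transpose_add, Matrix.transpose_smul, hBT, hMT]
  have hsymA : ∀ u v : Fin n → ℝ, u ⬝ᵥ A *ᵥ v = v ⬝ᵥ A *ᵥ u := by
    intro u v
    rw [Matrix.dotProduct_mulVec, ← Matrix.mulVec_transpose, hAT, dotProduct_comm]
  -- positive semidefiniteness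
  have hMpos : ∀ v : Fin n → ℝ, 0 ≤ v ⬝ᵥ (Wᵀ * diagonal d * (1 - W)) *ᵥ v := by
    intro v
    rw [hM]
    have hrw : diagonal (fun i => Real.sqrt (d i)) * Q * diagonal (fun i => l i - l i * l i) *
        Qᵀ * diagonal (fun i => Real.sqrt (d i)) =
        (Qᵀ * diagonal (fun i => Real.sqrt (d i)))ᵀ *
        (diagonal (fun i => l i - l i * l i) * (Qᵀ * diagonal (fun i => Real.sqrt (d i)))) := by
      simp [Matrix.transpose_mul, Matrix.mul_assoc]
    rw [hrw, quadform,
      show (diagonal (fun i => l i - l i * l i) * (Qᵀ * diagonal fun i => Real.sqrt (d i))) *ᵥ v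
        = diagonal (fun i => l i - l i * l i) *ᵥ ((Qᵀ * diagonal fun i => Real.sqrt (d i)) *ᵥ v)
        from (Matrix.mulVec_mulVec _ _ _).symm]
    set u := (Qᵀ * diagonal fun i => Real.sqrt (d i)) *ᵥ v with hu
    refine Finset.sum_nonneg fun i _ => ?_
    rw [Matrix.mulVec_diagonal]
    have h0 := (hl i).1
    have h1' := (hl i).2
    have hkey : 0 ≤ (l i * (1 - l i)) * (u i * u i) :=
      mul_nonneg (mul_nonneg h0 (by linarith)) (mul_self_nonneg _)
    nlinarith [hkey]
  have hBpos : ∀ v : Fin n → ℝ,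
      v ⬝ᵥ (Wᵀ * Fᵀ * F * W) *ᵥ v = ((F * W) *ᵥ v) ⬝ᵥ ((F * W) *ᵥ v) := by
    intro v
    have : Wᵀ * Fᵀ * F * W = (F * W)ᵀ * (F * W) := by
      rw [Matrix.transpose_mul, Matrix.mul_assoc, Matrix.mul_assoc]
    rw [this, quadform]
  -- quadratic form decomposition of A
  have hzAz : ∀ v : Fin n → ℝ, v ⬝ᵥ A *ᵥ v =
      ((F * W) *ᵥ v) ⬝ᵥ ((F * W) *ᵥ v) + ρ * (v ⬝ᵥ (Wᵀ * diagonal d * (1 - W)) *ᵥ v) := by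
    intro v
    rw [hA, Matrix.add_mulVec, dotProduct_add, Matrix.smul_mulVec, dotProduct_smul,
      hBpos, smul_eq_mul]
  have hApos : ∀ v : Fin n → ℝ, 0 ≤ v ⬝ᵥ A *ᵥ v := by
    intro v
    rw [hzAz]
    have := hMpos v
    have := dp_self_nonneg ((F * W) *ᵥ v)
    nlinarith
  -- θ in canonical quadratic form
  have hθ' : ∀ z, θ z = (1 / 2) * (z ⬝ᵥ A *ᵥ z) - b ⬝ᵥ z + (1 / 2) * (y ⬝ᵥ y) := by
    intro z
    have hbz : b ⬝ᵥ z = y ⬝ᵥ (F * W) *ᵥ z := by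
      rw [hb, ← Matrix.transpose_mul, Matrix.mulVec_transpose, ← Matrix.dotProduct_mulVec]
    rw [hθ z, hzAz, hbz, dotProduct_sub, sub_dotProduct, sub_dotProduct,
      dotProduct_comm ((F * W) *ᵥ z) y]
    ring
  intro zstar
  -- key expansion
  have keyid : ∀ w : Fin n → ℝ, θ (zstar + w) =
      θ zstar + ((A *ᵥ zstar - b) ⬝ᵥ w) + (1 / 2) * (w ⬝ᵥ A *ᵥ w) := by
    intro w
    rw [hθ' (zstar + w), hθ' zstar]
    rw [Matrix.mulVec_add, dotProduct_add, add_dotProduct, add_dotProduct,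
      dotProduct_add, sub_dotProduct]
    have hsw : w ⬝ᵥ A *ᵥ zstar = zstar ⬝ᵥ A *ᵥ w := hsymA w zstar
    have hdw : (A *ᵥ zstar) ⬝ᵥ w = zstar ⬝ᵥ A *ᵥ w := by
      rw [dotProduct_comm, hsymA w zstar]
    rw [hsw, hdw]
    ring
  constructor
  · intro hzs z
    have hzz : zstar + (z - zstar) = z := by abel
    have := keyid (z - zstar)
    rw [hzz, hzs, sub_self, zero_dotProduct] at this
    have := hApos (z - zstar)
    linarith
  · intro hmin
    set r := A *ᵥ zstar - b with hr
    have hineq : ∀ t : ℝ, 0 ≤ t * (r ⬝ᵥ r) + (1 / 2) * (t * t) * (r ⬝ᵥ A *ᵥ r) := by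
      intro t
      have := keyid (t • r)
      have h1' : r ⬝ᵥ t • r = t * (r ⬝ᵥ r) := by
        rw [dotProduct_smul, smul_eq_mul]
      have h2' : (t • r) ⬝ᵥ A *ᵥ (t • r) = (t * t) * (r ⬝ᵥ A *ᵥ r) := by
        rw [Matrix.mulVec_smul, dotProduct_smul, smul_dotProduct, smul_eq_mul, smul_eq_mul]
        ring
      rw [h1', h2'] at this
      have hmin' := hmin (zstar + t • r)
      linarith
    have hs0 : r ⬝ᵥ r = 0 := by
      by_contra hne
      have hs : 0 < r ⬝ᵥ r := lt_of_le_of_ne (dp_self_nonneg r) (Ne.symm hne)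
      have hc : 0 ≤ r ⬝ᵥ A *ᵥ r := hApos r
      set s := r ⬝ᵥ r
      set c := r ⬝ᵥ A *ᵥ r
      by_cases hc0 : c = 0
      · have h3 := hineq (-1)
        rw [hc0] at h3
        nlinarith
      · have hcpos : 0 < c := lt_of_le_of_ne hc (Ne.symm hc0)
        have h3 := hineq (-(s / c))
        have heq : -(s / c) * s + 1 / 2 * (-(s / c) * -(s / c)) * c = -(s * s) / (2 * c) := by
          field_simp
          ring
        rw [heq, neg_div] at h3
        have hpos : 0 < s * s / (2 * c) := by positivity
        linarith
    have : r = 0 := dotProduct_self_eq_zero.mp hs0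
    rw [hr, sub_eq_zero] at this
    exact this
end

section
/- Let n, m ≥ 1, let D be an n×n real diagonal matrix with strictly positive diagonal entries, let Q be an n×n real orthogonal matrix, and let Λ be an n×n real diagonal matrix with all diagonal entries in [0,1]. Set W = D^{-1/2} Q Λ Qᵀ D^{1/2} and W⁺ = D^{-1/2} Q Λ⁺ Qᵀ D^{1/2}, where Λ⁺ is the diagonal matrix with Λ⁺_ii = Λ_ii⁻¹ if Λ_ii > 0 and Λ⁺_ii = 0 otherwise. Let F be any m×n real matrix, y ∈ ℝᵐ, and ρ > 0. Define the objective J(x) = (1/2)‖y − F x‖² + (ρ/2) xᵀ D (I − W) W⁺ x for x ∈ R(W), and define A = Wᵀ Fᵀ F W + ρ Wᵀ D (I − W) and b = Wᵀ Fᵀ y. Then x* ∈ R(W) satisfies J(x*) ≤ J(x) for all x ∈ R(W) if and only if there exists z ∈ ℝⁿ with A z = b and x* = W z. In particular, the minimization of J over R(W) is solvable. -/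
open Matrix

lemma dot_symm_aux {n : ℕ} (A : Matrix (Fin n) (Fin n) ℝ) (hsym : Aᵀ = A)
    (u v : Fin n → ℝ) : u ⬝ᵥ A *ᵥ v = v ⬝ᵥ A *ᵥ u := by
  rw [dotProduct_mulVec, ← mulVec_transpose, hsym, dotProduct_comm]

lemma dot_transpose_aux {m n : ℕ} (M : Matrix (Fin m) (Fin n) ℝ)
    (x : Fin n → ℝ) (w : Fin m → ℝ) : x ⬝ᵥ (Mᵀ *ᵥ w) = (M *ᵥ x) ⬝ᵥ w := by
  rw [dotProduct_mulVec, vecMul_transpose]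

lemma quad_min_iff {n : ℕ} (A : Matrix (Fin n) (Fin n) ℝ) (hsym : Aᵀ = A)
    (hpsd : ∀ z, 0 ≤ z ⬝ᵥ A *ᵥ z) (b : Fin n → ℝ) (z₀ : Fin n → ℝ) :
    (∀ z, (1/2) * (z₀ ⬝ᵥ A *ᵥ z₀) - b ⬝ᵥ z₀ ≤ (1/2) * (z ⬝ᵥ A *ᵥ z) - b ⬝ᵥ z)
      ↔ A *ᵥ z₀ = b := by
  have expand : ∀ (h : Fin n → ℝ) (t : ℝ),
      (1/2) * ((z₀ + t • h) ⬝ᵥ A *ᵥ (z₀ + t • h)) - b ⬝ᵥ (z₀ + t • h)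
        = ((1/2) * (z₀ ⬝ᵥ A *ᵥ z₀) - b ⬝ᵥ z₀)
          + t * (h ⬝ᵥ A *ᵥ z₀ - b ⬝ᵥ h) + t^2 / 2 * (h ⬝ᵥ A *ᵥ h) := by
    intro h t
    simp only [mulVec_add, mulVec_smul, dotProduct_add, add_dotProduct,
      dotProduct_smul, smul_dotProduct, smul_eq_mul]
    linear_combination (t / 2) * dot_symm_aux A hsym z₀ h
  constructor
  · intro hmin
    set w : Fin n → ℝ := b - A *ᵥ z₀ with hw
    have hc : w ⬝ᵥ A *ᵥ z₀ - b ⬝ᵥ w = -(w ⬝ᵥ w) := by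
      rw [hw]
      simp only [sub_dotProduct, dotProduct_sub]
      linear_combination dotProduct_comm b (A *ᵥ z₀)
    set c : ℝ := w ⬝ᵥ w with hcdef
    set q : ℝ := w ⬝ᵥ A *ᵥ w with hq
    have hcnn : 0 ≤ c := by
      apply Finset.sum_nonneg; intro i _; exact mul_self_nonneg _
    have hqnn : 0 ≤ q := hpsd w
    have key : ∀ t : ℝ, 0 ≤ t * (-c) + t^2 / 2 * q := by
      intro t
      have := hmin (z₀ + t • w)
      rw [expand w t, hc] at this
      linarith
    have hc0 : c = 0 := by
      by_contra hcne
      have hcpos : 0 < c := lt_of_le_of_ne hcnn (Ne.symm hcne)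
      have hq1 : (0:ℝ) < q + 1 := by linarith
      have ht := key (c / (q + 1))
      have ht2 : 0 ≤ 2*(q+1)^2 * (c / (q + 1) * (-c) + (c / (q + 1))^2 / 2 * q) :=
        mul_nonneg (by positivity) ht
      have ht3 : 2*(q+1)^2 * (c / (q + 1) * (-c) + (c / (q + 1))^2 / 2 * q)
          = -2*c^2*(q+1) + c^2*q := by
        field_simp
      rw [ht3] at ht2
      nlinarith [mul_pos hcpos hcpos]
    have hw0 : w = 0 := dotProduct_self_eq_zero.mp hc0
    have := sub_eq_zero.mp (hw ▸ hw0)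
    exact this.symm
  · intro heq z
    obtain ⟨h, rfl⟩ : ∃ h, z = z₀ + (1:ℝ) • h := ⟨z - z₀, by simp⟩
    rw [expand h 1]
    have h0 : h ⬝ᵥ A *ᵥ z₀ - b ⬝ᵥ h = 0 := by
      rw [heq, dotProduct_comm b h, sub_self]
    rw [h0]
    have := hpsd h
    nlinarith

lemma exists_sol {n : ℕ} (A : Matrix (Fin n) (Fin n) ℝ) (hsym : Aᵀ = A)
    (b : Fin n → ℝ) (hb : ∀ v, A *ᵥ v = 0 → b ⬝ᵥ v = 0) :
    ∃ z, A *ᵥ z = b := by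
  set f := A.mulVecLin with hf
  have hfapp : ∀ x, f x = A *ᵥ x := fun x => rfl
  have hdisj : LinearMap.range f ⊓ LinearMap.ker f = ⊥ := by
    rw [Submodule.eq_bot_iff]
    intro x hx
    rw [Submodule.mem_inf] at hx
    obtain ⟨⟨z, hz⟩, hk⟩ := hx
    rw [LinearMap.mem_ker, hfapp] at hk
    rw [hfapp] at hz
    subst hz
    have h1 : (A *ᵥ z) ⬝ᵥ (A *ᵥ z) = z ⬝ᵥ A *ᵥ (A *ᵥ z) :=
      dot_symm_aux A hsym (A *ᵥ z) z
    rw [hk] at h1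
    simp only [mulVec_zero, dotProduct_zero] at h1
    exact dotProduct_self_eq_zero.mp h1
  have htop : LinearMap.range f ⊔ LinearMap.ker f = ⊤ := by
    apply Submodule.eq_top_of_finrank_eq
    have h1 := Submodule.finrank_sup_add_finrank_inf_eq (LinearMap.range f) (LinearMap.ker f)
    rw [hdisj] at h1
    simp only [finrank_bot, add_zero] at h1
    rw [h1, LinearMap.finrank_range_add_finrank_ker f, Module.finrank_fin_fun]
  have hbmem : b ∈ LinearMap.range f ⊔ LinearMap.ker f := htop ▸ Submodule.mem_top
  obtain ⟨u, hu, v, hv, huv⟩ := Submodule.mem_sup.mp hbmem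
  obtain ⟨z, hz⟩ := hu
  rw [hfapp] at hz
  rw [LinearMap.mem_ker, hfapp] at hv
  subst hz
  have hv0 : v = 0 := by
    have hbv : b ⬝ᵥ v = 0 := hb v hv
    have h1 : (A *ᵥ z) ⬝ᵥ v = 0 := by
      rw [dotProduct_comm, dot_symm_aux A hsym v z, hv]
      simp
    have h2 : v ⬝ᵥ v = 0 := by
      have : b ⬝ᵥ v = (A *ᵥ z) ⬝ᵥ v + v ⬝ᵥ v := by
        rw [← huv, add_dotProduct]
      rw [hbv, h1] at this
      linarith
    exact dotProduct_self_eq_zero.mp h2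
  exact ⟨z, by rw [← huv, hv0, add_zero]⟩

theorem stmt_12 (n m : ℕ) (hn : 1 ≤ n) (hm : 1 ≤ m)
    (d l : Fin n → ℝ) (hd : ∀ i, 0 < d i) (hl : ∀ i, 0 ≤ l i ∧ l i ≤ 1)
    (Q W Wp : Matrix (Fin n) (Fin n) ℝ)
    (hQ : Qᵀ * Q = 1)
    (hW : W = diagonal (fun i => (Real.sqrt (d i))⁻¹) * Q * diagonal l * Qᵀ *
      diagonal (fun i => Real.sqrt (d i)))
    (hWp : Wp = diagonal (fun i => (Real.sqrt (d i))⁻¹) * Q *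
      diagonal (fun i => if 0 < l i then (l i)⁻¹ else 0) * Qᵀ *
      diagonal (fun i => Real.sqrt (d i)))
    (F : Matrix (Fin m) (Fin n) ℝ) (y : Fin m → ℝ) (ρ : ℝ) (hρ : 0 < ρ)
    (J : (Fin n → ℝ) → ℝ)
    (hJ : ∀ x, J x = (1 / 2) * ((y - F *ᵥ x) ⬝ᵥ (y - F *ᵥ x)) +
      (ρ / 2) * (x ⬝ᵥ (diagonal d * (1 - W) * Wp) *ᵥ x))
    (A : Matrix (Fin n) (Fin n) ℝ) (b : Fin n → ℝ)
    (hA : A = Wᵀ * Fᵀ * F * W + ρ • (Wᵀ * diagonal d * (1 - W)))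
    (hb : b = (Wᵀ * Fᵀ) *ᵥ y) :
    (∀ xstar : Fin n → ℝ, (∃ u : Fin n → ℝ, W *ᵥ u = xstar) →
      ((∀ x : Fin n → ℝ, (∃ u : Fin n → ℝ, W *ᵥ u = x) → J xstar ≤ J x) ↔
        (∃ z : Fin n → ℝ, A *ᵥ z = b ∧ xstar = W *ᵥ z))) ∧
    (∃ xstar : Fin n → ℝ, (∃ u : Fin n → ℝ, W *ᵥ u = xstar) ∧
      ∀ x : Fin n → ℝ, (∃ u : Fin n → ℝ, W *ᵥ u = x) → J xstar ≤ J x) := by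
  have hQQ : Q * Qᵀ = 1 := mul_eq_one_comm.mp hQ
  obtain ⟨S, hS⟩ : ∃ X, diagonal (fun i => Real.sqrt (d i)) = X := ⟨_, rfl⟩
  obtain ⟨Si, hSi⟩ : ∃ X, diagonal (fun i => (Real.sqrt (d i))⁻¹) = X := ⟨_, rfl⟩
  rw [hS, hSi] at hW hWp
  have hsne : ∀ i, Real.sqrt (d i) ≠ 0 := fun i => (Real.sqrt_pos.mpr (hd i)).ne'
  have hST : Sᵀ = S := by rw [← hS, diagonal_transpose]
  have hSiT : Siᵀ = Si := by rw [← hSi, diagonal_transpose]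
  have hSiS : Si * S = 1 := by
    rw [← hS, ← hSi, diagonal_mul_diagonal]
    have : (fun i => (Real.sqrt (d i))⁻¹ * Real.sqrt (d i)) = fun _ => (1:ℝ) :=
      funext fun i => inv_mul_cancel₀ (hsne i)
    rw [this]
    exact diagonal_one
  have hSSi : S * Si = 1 := by
    rw [← hS, ← hSi, diagonal_mul_diagonal]
    have : (fun i => Real.sqrt (d i) * (Real.sqrt (d i))⁻¹) = fun _ => (1:ℝ) :=
      funext fun i => mul_inv_cancel₀ (hsne i)
    rw [this]
    exact diagonal_one
  have hSS : S * S = diagonal d := by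
    rw [← hS, diagonal_mul_diagonal]
    have : (fun i => Real.sqrt (d i) * Real.sqrt (d i)) = d :=
      funext fun i => Real.mul_self_sqrt (hd i).le
    rw [this]
  -- collapse helpers
  have c1 : ∀ X : Matrix (Fin n) (Fin n) ℝ, Qᵀ * (Q * X) = X := by
    intro X; rw [← mul_assoc, hQ, one_mul]
  have c3 : ∀ X : Matrix (Fin n) (Fin n) ℝ, S * (Si * X) = X := by
    intro X; rw [← mul_assoc, hSSi, one_mul]
  have c4 : ∀ X : Matrix (Fin n) (Fin n) ℝ, Si * (S * X) = X := by
    intro X; rw [← mul_assoc, hSiS, one_mul]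
  have c5 : ∀ (a c : Fin n → ℝ) (X : Matrix (Fin n) (Fin n) ℝ),
      diagonal a * (diagonal c * X) = diagonal (fun i => a i * c i) * X := by
    intro a c X; rw [← mul_assoc, diagonal_mul_diagonal]
  -- right-assoc forms
  have hW' : W = Si * (Q * (diagonal l * (Qᵀ * S))) := by rw [hW]; simp only [mul_assoc]
  have hWp' : Wp = Si * (Q * (diagonal (fun i => if 0 < l i then (l i)⁻¹ else 0) * (Qᵀ * S))) := by
    rw [hWp]; simp only [mul_assoc]
  have hWT : Wᵀ = S * (Q * (diagonal l * (Qᵀ * Si))) := by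
    rw [hW]
    simp only [transpose_mul, transpose_transpose, diagonal_transpose, hST, hSiT, mul_assoc]
  -- E a := S * (Q * (diagonal a * (Qᵀ * S)))
  have hEC : ∀ a c : Fin n → ℝ,
      (S * (Q * (diagonal a * (Qᵀ * S)))) * (Si * (Q * (diagonal c * (Qᵀ * S))))
        = S * (Q * (diagonal (fun i => a i * c i) * (Qᵀ * S))) := by
    intro a c
    simp only [mul_assoc]
    rw [c3, c1, c5]
  have hWD : Wᵀ * diagonal d = S * (Q * (diagonal l * (Qᵀ * S))) := by
    rw [hWT, ← hSS]
    simp only [mul_assoc]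
    rw [c4]
  have hM : Wᵀ * diagonal d * (1 - W)
      = S * (Q * (diagonal (fun i => l i - l i * l i) * (Qᵀ * S))) := by
    rw [mul_sub, mul_one, hWD]
    conv_lhs => rw [hW']
    rw [hEC]
    have hdsub : diagonal (fun i => l i - l i * l i)
        = diagonal l - diagonal (fun i => l i * l i) := by
      rw [diagonal_sub]
    rw [hdsub]
    simp only [mul_sub, sub_mul]
  have hKmat : Wᵀ * (diagonal d * (1 - W) * Wp) * W
      = S * (Q * (diagonal (fun i => l i - l i * l i) * (Qᵀ * S))) := by
    have hassoc : Wᵀ * (diagonal d * (1 - W) * Wp) * W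
        = Wᵀ * diagonal d * (1 - W) * Wp * W := by
      simp only [mul_assoc]
    rw [hassoc, hM]
    conv_lhs => rw [hWp', hW']
    rw [hEC]
    beta_reduce
    rw [hEC]
    beta_reduce
    have hfun : (fun i => ((l i - l i * l i) * if 0 < l i then (l i)⁻¹ else 0) * l i)
        = fun i => l i - l i * l i := by
      funext i
      rcases (hl i).1.lt_or_eq with h | h
      · rw [if_pos h]
        have hne : l i ≠ 0 := ne_of_gt h
        field_simp
      · simp [← h]
    rw [hfun]
  have hMsym : (Wᵀ * diagonal d * (1 - W))ᵀ = Wᵀ * diagonal d * (1 - W) := by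
    rw [hM]
    simp only [transpose_mul, transpose_transpose, diagonal_transpose, hST, mul_assoc]
  have hMpsd : ∀ z : Fin n → ℝ, 0 ≤ z ⬝ᵥ (Wᵀ * diagonal d * (1 - W)) *ᵥ z := by
    intro z
    rw [hM]
    have hform : S * (Q * (diagonal (fun i => l i - l i * l i) * (Qᵀ * S)))
        = (Qᵀ * S)ᵀ * (diagonal (fun i => l i - l i * l i) * (Qᵀ * S)) := by
      simp only [transpose_mul, transpose_transpose, hST, mul_assoc]
    rw [hform, ← mulVec_mulVec, dot_transpose_aux,
      show (diagonal (fun i => l i - l i * l i) * (Qᵀ * S)) *ᵥ z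
        = diagonal (fun i => l i - l i * l i) *ᵥ ((Qᵀ * S) *ᵥ z) from
        (mulVec_mulVec z _ _).symm]
    set v : Fin n → ℝ := (Qᵀ * S) *ᵥ z with hv
    have hdv : diagonal (fun i => l i - l i * l i) *ᵥ v
        = fun i => (l i - l i * l i) * v i := by
      funext i
      rw [mulVec_diagonal]
    rw [hdv]
    apply Finset.sum_nonneg
    intro i _
    have h1 := (hl i).1
    have h2 := (hl i).2
    simp only
    nlinarith [mul_self_nonneg (v i),
      mul_nonneg (mul_nonneg h1 (by linarith : 0 ≤ 1 - l i)) (mul_self_nonneg (v i))]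
  have hP1 : Wᵀ * Fᵀ * F * W = (F * W)ᵀ * (F * W) := by
    simp only [transpose_mul, Matrix.mul_assoc]
  have hP1dot : ∀ z : Fin n → ℝ,
      z ⬝ᵥ (Wᵀ * Fᵀ * F * W) *ᵥ z = ((F * W) *ᵥ z) ⬝ᵥ ((F * W) *ᵥ z) := by
    intro z
    rw [hP1, ← mulVec_mulVec, dot_transpose_aux]
  have hBpsd : ∀ z : Fin n → ℝ, 0 ≤ z ⬝ᵥ (Wᵀ * Fᵀ * F * W) *ᵥ z := by
    intro z
    rw [hP1dot]
    apply Finset.sum_nonneg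
    intro i _
    exact mul_self_nonneg _
  have hsplit : ∀ z : Fin n → ℝ, z ⬝ᵥ A *ᵥ z
      = z ⬝ᵥ (Wᵀ * Fᵀ * F * W) *ᵥ z + ρ * (z ⬝ᵥ (Wᵀ * diagonal d * (1 - W)) *ᵥ z) := by
    intro z
    rw [hA, add_mulVec, dotProduct_add, smul_mulVec, dotProduct_smul, smul_eq_mul]
  have hAsym : Aᵀ = A := by
    rw [hA, transpose_add, transpose_smul, hMsym]
    congr 1
    simp only [transpose_mul, transpose_transpose, Matrix.mul_assoc]
  have hApsd : ∀ z : Fin n → ℝ, 0 ≤ z ⬝ᵥ A *ᵥ z := by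
    intro z
    rw [hsplit]
    have h1 := hBpsd z
    have h2 := hMpsd z
    nlinarith
  have hbB : b = (F * W)ᵀ *ᵥ y := by rw [hb, transpose_mul]
  have hJW : ∀ z : Fin n → ℝ,
      J (W *ᵥ z) = ((1/2) * (z ⬝ᵥ A *ᵥ z) - b ⬝ᵥ z) + (1/2) * (y ⬝ᵥ y) := by
    intro z
    have e2 : (W *ᵥ z) ⬝ᵥ (diagonal d * (1 - W) * Wp) *ᵥ (W *ᵥ z)
        = z ⬝ᵥ (Wᵀ * diagonal d * (1 - W)) *ᵥ z := by
      rw [mulVec_mulVec, ← dot_transpose_aux W z, mulVec_mulVec, ← mul_assoc, hKmat, ← hM]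
    have hyb : y ⬝ᵥ ((F * W) *ᵥ z) = b ⬝ᵥ z := by
      calc y ⬝ᵥ ((F * W) *ᵥ z) = ((F * W) *ᵥ z) ⬝ᵥ y := dotProduct_comm _ _
      _ = z ⬝ᵥ ((F * W)ᵀ *ᵥ y) := (dot_transpose_aux (F * W) z y).symm
      _ = ((F * W)ᵀ *ᵥ y) ⬝ᵥ z := dotProduct_comm _ _
      _ = b ⬝ᵥ z := by rw [hbB]
    rw [hJ, mulVec_mulVec, e2, hsplit]
    simp only [dotProduct_sub, sub_dotProduct]
    rw [hyb]
    rw [show ((F * W) *ᵥ z) ⬝ᵥ y = b ⬝ᵥ z from by rw [← hyb]; exact dotProduct_comm _ _]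
    rw [← hP1dot]
    ring
  have main : ∀ u : Fin n → ℝ,
      (∀ x, (∃ u', W *ᵥ u' = x) → J (W *ᵥ u) ≤ J x) ↔ A *ᵥ u = b := by
    intro u
    rw [← quad_min_iff A hAsym hApsd b u]
    constructor
    · intro hmin z
      have h := hmin (W *ᵥ z) ⟨z, rfl⟩
      rw [hJW, hJW] at h
      linarith
    · rintro hq x ⟨u', rfl⟩
      rw [hJW, hJW]
      have := hq u'
      linarith
  refine ⟨?_, ?_⟩
  · rintro xstar ⟨u, hu⟩
    subst hu
    constructor
    · intro hmin
      exact ⟨u, (main u).mp hmin, rfl⟩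
    · rintro ⟨z, hz, hxz⟩
      rw [hxz]
      exact (main z).mpr hz
  · have horth : ∀ v, A *ᵥ v = 0 → b ⬝ᵥ v = 0 := by
      intro v hv
      have h0 : v ⬝ᵥ A *ᵥ v = 0 := by rw [hv, dotProduct_zero]
      rw [hsplit] at h0
      have h1 := hBpsd v
      have h2 := hMpsd v
      have h3 : v ⬝ᵥ (Wᵀ * Fᵀ * F * W) *ᵥ v = 0 := by nlinarith
      rw [hP1dot] at h3
      have h4 : (F * W) *ᵥ v = 0 := dotProduct_self_eq_zero.mp h3
      calc b ⬝ᵥ v = v ⬝ᵥ ((F * W)ᵀ *ᵥ y) := by rw [hbB, dotProduct_comm]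
      _ = ((F * W) *ᵥ v) ⬝ᵥ y := dot_transpose_aux _ _ _
      _ = 0 := by rw [h4, zero_dotProduct]
    obtain ⟨z, hz⟩ := exists_sol A hAsym b horth
    exact ⟨W *ᵥ z, ⟨z, rfl⟩, (main z).mpr hz⟩
end
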